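/- Exponential bound for the Borel-plane recursion sequence. Let B, C > 0 be real constants. Define a sequence of nonnegative reals by M_n := Σ_{m=0}^{n} C·Bᵐ·( Σ_{i₁+⋯+i_m = n−m, i_j ≥ 0} M_{i₁}⋯M_{i_m} + Σ_{i₁+⋯+i_m = n−m−1, i_j ≥ 0} M_{i₁}⋯M_{i_m} ) for every n ≥ 0, where empty products (m = 0) equal 1 and sums over compositions of a negative integer are 0 (so M₀ = C, M₁ = C·(1 + B·M₀), and in general the right-hand side involves only M_i with i < n). Then there exist constants D, M > 0 such that M_n ≤ D·Mⁿ for all n ∈ ℕ. -/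

import Mathlib

/-- The finite set of compositions of `j` into `m` (nonnegative) parts. -/
def comps (m j : ℕ) : Finset (Fin m → ℕ) :=
  (Fintype.piFinset fun _ : Fin m => Finset.range (j + 1)).filter fun t => ∑ i, t i = j

/-- **Exponential bound for the Borel-plane recursion sequence.** If
`M_n = Σ_{m=0}^{n} C·Bᵐ·( Σ_{i₁+⋯+i_m=n−m} M_{i₁}⋯M_{i_m} + Σ_{i₁+⋯+i_m=n−m−1} M_{i₁}⋯M_{i_m} )`
(sums over compositions of a negative integer being `0`), then `M_n ≤ D·Mⁿ` for some
constants `D, M > 0`. -/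
lemma mem_comps {m j : ℕ} {t : Fin m → ℕ} : t ∈ comps m j ↔ ∑ i, t i = j := by
  simp only [comps, Finset.mem_filter, Fintype.mem_piFinset, Finset.mem_range]
  constructor
  · rintro ⟨-, h⟩; exact h
  · intro h
    exact ⟨fun i => Nat.lt_succ_of_le (h ▸ Finset.single_le_sum (f := t)
      (fun _ _ => Nat.zero_le _) (Finset.mem_univ i)), h⟩

lemma sum_comps_succ (f : ℕ → ℝ) (m j : ℕ) :
    ∑ t ∈ comps (m + 1) j, ∏ i, f (t i)
      = ∑ k ∈ Finset.range (j + 1), f k * ∑ t ∈ comps m (j - k), ∏ i, f (t i) := by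
  simp_rw [Finset.mul_sum]
  have hs := Finset.sum_sigma (Finset.range (j + 1)) (fun k => comps m (j - k))
    (fun p : Σ _ : ℕ, Fin m → ℕ => f p.1 * ∏ i, f (p.2 i))
  rw [← hs]
  symm
  refine Finset.sum_nbij' (i := fun p : Σ _ : ℕ, Fin m → ℕ => Fin.cons p.1 p.2)
    (j := fun t : Fin (m + 1) → ℕ => ⟨t 0, Fin.tail t⟩) ?_ ?_ ?_ ?_ ?_
  · rintro ⟨k, t⟩ hp
    rw [Finset.mem_sigma] at hp
    obtain ⟨hk, ht⟩ := hp
    rw [Finset.mem_range] at hk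
    rw [mem_comps] at ht ⊢
    rw [Fin.sum_cons, ht]
    omega
  · intro t ht
    rw [mem_comps] at ht
    rw [Fin.sum_univ_succ] at ht
    refine Finset.mem_sigma.mpr ⟨Finset.mem_range.mpr
      (Nat.lt_succ_of_le (Nat.le.intro ht)), mem_comps.mpr ?_⟩
    have htail : ∑ i, Fin.tail t i = ∑ i : Fin m, t i.succ := rfl
    rw [htail]
    exact Nat.eq_sub_of_add_eq' ht
  · rintro ⟨k, t⟩ hp
    simp [Fin.tail_cons]
  · intro t ht
    exact Fin.cons_self_tail t
  · rintro ⟨k, t⟩ hp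
    rw [Fin.prod_univ_succ]
    simp [Fin.cons_succ]

noncomputable def uu (k : ℕ) : ℝ := 1 / (((k : ℝ) + 1) ^ 2)

lemma uu_pos (k : ℕ) : 0 < uu k := by unfold uu; positivity

lemma uu_le_one (k : ℕ) : uu k ≤ 1 := by
  unfold uu
  rw [div_le_one (by positivity)]
  nlinarith [Nat.cast_nonneg (α := ℝ) k]

lemma sum_uu_le (j : ℕ) : ∑ k ∈ Finset.range j, uu k ≤ 2 - 2 / ((j : ℝ) + 1) := by
  induction j with
  | zero => norm_num
  | succ j ih =>
    rw [Finset.sum_range_succ]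
    have hj : (0 : ℝ) < (j : ℝ) + 1 := by positivity
    have hj2 : (0 : ℝ) < (j : ℝ) + 2 := by positivity
    have key : uu j ≤ 2 / ((j : ℝ) + 1) - 2 / ((j : ℝ) + 2) := by
      unfold uu
      rw [div_sub_div _ _ (ne_of_gt hj) (ne_of_gt hj2),
        div_le_div_iff₀ (by positivity) (by positivity)]
      ring_nf
      nlinarith [Nat.cast_nonneg (α := ℝ) j]
    have hcast : ((j + 1 : ℕ) : ℝ) + 1 = (j : ℝ) + 2 := by push_cast; ring
    rw [hcast]
    linarith

lemma sum_uu_le_two (j : ℕ) : ∑ k ∈ Finset.range j, uu k ≤ 2 := by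
  have h : (0:ℝ) < 2 / ((j:ℝ)+1) := by positivity
  linarith [sum_uu_le j]

lemma conv_aux {a b c : ℝ} (ha : 1 ≤ a) (hb : 1 ≤ b) (hc : 1 ≤ c) (h : a + b = c + 1) :
    1 / a ^ 2 * (1 / b ^ 2) ≤ 4 * (1 / c ^ 2) * (1 / a ^ 2 + 1 / b ^ 2) := by
  have ha0 : (0:ℝ) < a := by linarith
  have hb0 : (0:ℝ) < b := by linarith
  have hc0 : (0:ℝ) < c := by linarith
  have ha' : a ≠ 0 := ne_of_gt ha0
  have hb' : b ≠ 0 := ne_of_gt hb0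
  have hc' : c ≠ 0 := ne_of_gt hc0
  have key : c ^ 2 ≤ 4 * (b ^ 2 + a ^ 2) := by nlinarith [sq_nonneg (a - b)]
  have h4 : (0:ℝ) < a ^ 2 * b ^ 2 := by positivity
  have hc2 : (0:ℝ) < c ^ 2 := by positivity
  field_simp
  nlinarith [mul_pos h4 hc2, mul_le_mul_of_nonneg_left key h4.le]

lemma uu_conv (j : ℕ) : ∑ k ∈ Finset.range (j + 1), uu k * uu (j - k) ≤ 16 * uu j := by
  have hterm : ∀ k ∈ Finset.range (j + 1),
      uu k * uu (j - k) ≤ 4 * uu j * (uu k + uu (j - k)) := by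
    intro k hk
    rw [Finset.mem_range] at hk
    have hkj : k ≤ j := Nat.lt_succ_iff.mp hk
    have hBc : ((j - k : ℕ) : ℝ) = (j : ℝ) - (k : ℝ) := by rw [Nat.cast_sub hkj]
    have hA1 : (1:ℝ) ≤ (k : ℝ) + 1 := by linarith [Nat.cast_nonneg (α := ℝ) k]
    have hB1 : (1:ℝ) ≤ ((j - k : ℕ) : ℝ) + 1 := by linarith [Nat.cast_nonneg (α := ℝ) (j - k)]
    have hC1 : (1:ℝ) ≤ (j : ℝ) + 1 := by linarith [Nat.cast_nonneg (α := ℝ) j]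
    have hsum : ((k : ℝ) + 1) + (((j - k : ℕ) : ℝ) + 1) = ((j : ℝ) + 1) + 1 := by
      rw [hBc]; ring
    exact conv_aux hA1 hB1 hC1 hsum
  have hrefl : ∑ k ∈ Finset.range (j + 1), uu (j - k) = ∑ k ∈ Finset.range (j + 1), uu k := by
    rw [← Finset.sum_range_reflect (fun k => uu k) (j + 1)]
    apply Finset.sum_congr rfl
    intro k hk
    have h : j - k = j + 1 - 1 - k := by omega
    rw [h]
  calc ∑ k ∈ Finset.range (j + 1), uu k * uu (j - k)
      ≤ ∑ k ∈ Finset.range (j + 1), 4 * uu j * (uu k + uu (j - k)) :=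
        Finset.sum_le_sum hterm
    _ = 4 * uu j * (∑ k ∈ Finset.range (j + 1), uu k
          + ∑ k ∈ Finset.range (j + 1), uu (j - k)) := by
        rw [← Finset.mul_sum, Finset.sum_add_distrib]
    _ ≤ 4 * uu j * (2 + 2) := by
        rw [hrefl]
        have h1 := sum_uu_le_two (j + 1)
        have h0 := (uu_pos j).le
        have h4 : (0:ℝ) ≤ 4 * uu j := by positivity
        nlinarith
    _ = 16 * uu j := by ring


lemma comps_zero_zero : comps 0 0 = {![]} := by
  apply Finset.eq_singleton_iff_unique_mem.mpr
  constructor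
  · rw [mem_comps]; simp
  · intro t _
    funext i
    exact i.elim0

lemma comps_zero_succ (j : ℕ) : comps 0 (j + 1) = ∅ := by
  ext t
  rw [mem_comps]
  simp

lemma P_le (m : ℕ) : ∀ j : ℕ, ∑ t ∈ comps m j, ∏ i, uu (t i) ≤ 16 ^ m * uu j := by
  induction m with
  | zero =>
    intro j
    cases j with
    | zero =>
      rw [comps_zero_zero]
      simp [uu]
    | succ j =>
      rw [comps_zero_succ]
      simp only [Finset.sum_empty, pow_zero, one_mul]
      exact (uu_pos _).le
  | succ m ih =>
    intro j
    rw [sum_comps_succ]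
    calc ∑ k ∈ Finset.range (j + 1), uu k * ∑ t ∈ comps m (j - k), ∏ i, uu (t i)
        ≤ ∑ k ∈ Finset.range (j + 1), uu k * (16 ^ m * uu (j - k)) := by
          apply Finset.sum_le_sum
          intro k _
          exact mul_le_mul_of_nonneg_left (ih (j - k)) (uu_pos k).le
      _ = 16 ^ m * ∑ k ∈ Finset.range (j + 1), uu k * uu (j - k) := by
          rw [Finset.mul_sum]
          apply Finset.sum_congr rfl
          intro k _
          ring
      _ ≤ 16 ^ m * (16 * uu j) := by
          apply mul_le_mul_of_nonneg_left (uu_conv j) (by positivity)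
      _ = 16 ^ (m + 1) * uu j := by ring

lemma uu_shift1 {m n : ℕ} (h : m ≤ n) : uu (n - m) ≤ ((m : ℝ) + 1) ^ 2 * uu n := by
  have hnat : n + 1 ≤ (m + 1) * (n - m + 1) := by
    have : (m + 1) * (n - m + 1) = m * (n - m) + m + (n - m) + 1 := by ring
    omega
  have hcast : ((n : ℝ) + 1) ≤ ((m : ℝ) + 1) * (((n - m : ℕ) : ℝ) + 1) := by
    have := (Nat.cast_le (α := ℝ)).mpr hnat
    push_cast at this
    linarith
  unfold uu
  rw [mul_one_div, div_le_div_iff₀ (by positivity) (by positivity)]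
  have h1 : (0:ℝ) ≤ (n : ℝ) + 1 := by positivity
  nlinarith [hcast, h1, mul_nonneg (by positivity : (0:ℝ) ≤ ((m:ℝ)+1)) (by positivity : (0:ℝ) ≤ (((n-m:ℕ):ℝ)+1))]

lemma uu_shift2 {m n : ℕ} (h : m + 1 ≤ n) : uu (n - m - 1) ≤ ((m : ℝ) + 2) ^ 2 * uu n := by
  have hnat : n + 1 ≤ (m + 2) * (n - m - 1 + 1) := by
    have : (m + 2) * (n - m - 1 + 1) = m * (n - m - 1) + 2 * (n - m - 1) + m + 2 := by ring
    omega
  have hcast : ((n : ℝ) + 1) ≤ ((m : ℝ) + 2) * (((n - m - 1 : ℕ) : ℝ) + 1) := by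
    have := (Nat.cast_le (α := ℝ)).mpr hnat
    push_cast at this
    linarith
  unfold uu
  rw [mul_one_div, div_le_div_iff₀ (by positivity) (by positivity)]
  have h1 : (0:ℝ) ≤ (n : ℝ) + 1 := by positivity
  nlinarith [hcast, h1, mul_nonneg (by positivity : (0:ℝ) ≤ ((m:ℝ)+2)) (by positivity : (0:ℝ) ≤ (((n-m-1:ℕ):ℝ)+1))]

lemma sq_le_two_pow (m : ℕ) : ((m : ℝ) + 1) ^ 2 ≤ 4 * 2 ^ m := by
  induction m with
  | zero => norm_num
  | succ m ih =>
    have h1 : ((m : ℝ) + 1) ^ 2 ≥ 2 * (m : ℝ) + 1 := by nlinarith [Nat.cast_nonneg (α := ℝ) m]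
    push_cast
    have h2 : (2:ℝ) ^ (m + 1) = 2 * 2 ^ m := by ring
    rw [h2]
    have h3 : ((m : ℝ) + 1) ≤ 2 ^ m := by
      have := Nat.lt_two_pow_self (n := m)
      have h4 : (m + 1 : ℕ) ≤ 2 ^ m := this
      exact_mod_cast h4
    nlinarith [Nat.cast_nonneg (α := ℝ) m, ih]

lemma geom_le_two (N : ℕ) : ∑ m ∈ Finset.range N, ((2:ℝ)⁻¹) ^ m ≤ 2 := by
  rw [geom_sum_eq (by norm_num : (2:ℝ)⁻¹ ≠ 1)]
  rw [div_le_iff_of_neg (by norm_num : (2:ℝ)⁻¹ - 1 < 0)]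
  have := pow_nonneg (by norm_num : (0:ℝ) ≤ 2⁻¹) N
  linarith

theorem borel_recursion_exponential_bound
    (B C : ℝ) (hB : 0 < B) (hC : 0 < C)
    (Mseq : ℕ → ℝ)
    (hrec : ∀ n : ℕ, Mseq n =
      ∑ m ∈ Finset.range (n + 1), C * B ^ m *
        ((∑ t ∈ comps m (n - m), ∏ j, Mseq (t j)) +
          (if m + 1 ≤ n then ∑ t ∈ comps m (n - m - 1), ∏ j, Mseq (t j) else 0))) :
    ∃ D > (0 : ℝ), ∃ M > (0 : ℝ), ∀ n : ℕ, Mseq n ≤ D * M ^ n := by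
  obtain ⟨D, hD0, hDeq⟩ : ∃ D : ℝ, 0 < D ∧ D = 40 * C := ⟨40 * C, by positivity, rfl⟩
  obtain ⟨M, hM1, hMB⟩ : ∃ M : ℝ, 1 ≤ M ∧ 64 * B * D ≤ M :=
    ⟨max 1 (64 * B * D), le_max_left _ _, le_max_right _ _⟩
  have hM0 : (0:ℝ) < M := lt_of_lt_of_le one_pos hM1
  -- nonnegativity of the sequence
  have hnn : ∀ n, 0 ≤ Mseq n := by
    intro n
    induction n using Nat.strong_induction_on with
    | _ n ih =>
      rw [hrec n]
      apply Finset.sum_nonneg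
      intro m hm
      rw [Finset.mem_range] at hm
      have hmn : m ≤ n := Nat.lt_succ_iff.mp hm
      have hgen : ∀ j : ℕ, j + m ≤ n → 0 ≤ ∑ t ∈ comps m j, ∏ i, Mseq (t i) := by
        intro j hj
        apply Finset.sum_nonneg
        intro t ht
        apply Finset.prod_nonneg
        intro i _
        apply ih
        have hsum := mem_comps.mp ht
        have hle : t i ≤ j := hsum ▸ Finset.single_le_sum (f := t)
          (fun _ _ => Nat.zero_le _) (Finset.mem_univ i)
        have hm1 : 0 < m := i.pos
        omega
      apply mul_nonneg (by positivity)
      apply add_nonneg (hgen (n - m) (by omega))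
      split
      · next hc => exact hgen (n - m - 1) (by omega)
      · exact le_refl 0
  -- main induction with Nagumo weight
  have key : ∀ n, Mseq n ≤ D * M ^ n * uu n := by
    intro n
    induction n using Nat.strong_induction_on with
    | _ n ih =>
      have hterm : ∀ m ∈ Finset.range (n + 1),
          C * B ^ m * ((∑ t ∈ comps m (n - m), ∏ j, Mseq (t j)) +
            (if m + 1 ≤ n then ∑ t ∈ comps m (n - m - 1), ∏ j, Mseq (t j) else 0))
          ≤ 20 * C * (M ^ n * uu n) * ((2:ℝ)⁻¹) ^ m := by
        intro m hm
        rw [Finset.mem_range] at hm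
        have hmn : m ≤ n := Nat.lt_succ_iff.mp hm
        have hMn0 : (0:ℝ) ≤ M ^ n := pow_nonneg hM0.le n
        -- generic bound on composition sums
        have hgen : ∀ j : ℕ, j + m ≤ n →
            ∑ t ∈ comps m j, ∏ i, Mseq (t i) ≤ D ^ m * M ^ j * (16 ^ m * uu j) := by
          intro j hj
          have hstep : ∀ t ∈ comps m j, ∏ i, Mseq (t i) ≤ D ^ m * M ^ j * ∏ i, uu (t i) := by
            intro t ht
            have hsum := mem_comps.mp ht
            have hb : ∀ i : Fin m, Mseq (t i) ≤ D * M ^ (t i) * uu (t i) := by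
              intro i
              have hle : t i ≤ j := hsum ▸ Finset.single_le_sum (f := t)
                (fun _ _ => Nat.zero_le _) (Finset.mem_univ i)
              have hm1 : 0 < m := i.pos
              exact ih (t i) (by omega)
            calc ∏ i, Mseq (t i) ≤ ∏ i, (D * M ^ (t i) * uu (t i)) :=
                  Finset.prod_le_prod (fun i _ => hnn (t i)) (fun i _ => hb i)
              _ = D ^ m * M ^ j * ∏ i, uu (t i) := by
                  rw [Finset.prod_mul_distrib, Finset.prod_mul_distrib,
                    Finset.prod_const, Finset.card_univ, Fintype.card_fin,
                    Finset.prod_pow_eq_pow_sum, hsum]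
          calc ∑ t ∈ comps m j, ∏ i, Mseq (t i)
              ≤ ∑ t ∈ comps m j, D ^ m * M ^ j * ∏ i, uu (t i) := Finset.sum_le_sum hstep
            _ = D ^ m * M ^ j * ∑ t ∈ comps m j, ∏ i, uu (t i) := by rw [Finset.mul_sum]
            _ ≤ D ^ m * M ^ j * (16 ^ m * uu j) := by
                apply mul_le_mul_of_nonneg_left (P_le m j)
                exact mul_nonneg (pow_nonneg hD0.le m) (pow_nonneg hM0.le j)
        -- numerical facts
        have hBD0 : (0:ℝ) ≤ 16 * B * D := by positivity
        have h2 : (16 * B * D) ^ m ≤ (M / 4) ^ m :=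
          pow_le_pow_left₀ hBD0 (by linarith) m
        have hM4 : (0:ℝ) ≤ (M / 4) ^ m := pow_nonneg (by linarith) m
        have hsplit : (M / 4) ^ m = M ^ m * ((4:ℝ)⁻¹) ^ m := by
          rw [div_pow, div_eq_mul_inv, inv_pow]
        -- piece A
        have hA : B ^ m * (D ^ m * M ^ (n - m) * (16 ^ m * uu (n - m)))
            ≤ ((4:ℝ)⁻¹) ^ m * M ^ n * (((m:ℝ) + 1) ^ 2 * uu n) := by
          have e1 : B ^ m * (D ^ m * M ^ (n - m) * (16 ^ m * uu (n - m)))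
              = (16 * B * D) ^ m * M ^ (n - m) * uu (n - m) := by
            rw [mul_pow, mul_pow]; ring
          have h4 : M ^ (n - m) * M ^ m = M ^ n := by
            rw [← pow_add]; congr 1; omega
          have h5 : uu (n - m) ≤ ((m:ℝ) + 1) ^ 2 * uu n := uu_shift1 hmn
          rw [e1]
          calc (16 * B * D) ^ m * M ^ (n - m) * uu (n - m)
              ≤ (M / 4) ^ m * M ^ (n - m) * (((m:ℝ) + 1) ^ 2 * uu n) := by
                apply mul_le_mul _ h5 (uu_pos _).le
                  (mul_nonneg hM4 (pow_nonneg hM0.le _))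
                exact mul_le_mul_of_nonneg_right h2 (pow_nonneg hM0.le _)
            _ = ((4:ℝ)⁻¹) ^ m * M ^ n * (((m:ℝ) + 1) ^ 2 * uu n) := by
                rw [hsplit, show M ^ m * ((4:ℝ)⁻¹) ^ m * M ^ (n - m)
                  = ((4:ℝ)⁻¹) ^ m * (M ^ (n - m) * M ^ m) by ring, h4]
        -- piece B (only when m + 1 ≤ n)
        have hBpiece : ∀ hc : m + 1 ≤ n,
            B ^ m * (D ^ m * M ^ (n - m - 1) * (16 ^ m * uu (n - m - 1)))
            ≤ ((4:ℝ)⁻¹) ^ m * M ^ n * (((m:ℝ) + 2) ^ 2 * uu n) := by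
          intro hc
          have e1 : B ^ m * (D ^ m * M ^ (n - m - 1) * (16 ^ m * uu (n - m - 1)))
              = (16 * B * D) ^ m * M ^ (n - m - 1) * uu (n - m - 1) := by
            rw [mul_pow, mul_pow]; ring
          have h4 : M ^ (n - m - 1) * M ^ m = M ^ (n - 1) := by
            rw [← pow_add]; congr 1; omega
          have h4' : M ^ (n - 1) ≤ M ^ n := pow_le_pow_right₀ hM1 (by omega)
          have h5 : uu (n - m - 1) ≤ ((m:ℝ) + 2) ^ 2 * uu n := uu_shift2 hc
          rw [e1]
          calc (16 * B * D) ^ m * M ^ (n - m - 1) * uu (n - m - 1)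
              ≤ (M / 4) ^ m * M ^ (n - m - 1) * (((m:ℝ) + 2) ^ 2 * uu n) := by
                apply mul_le_mul _ h5 (uu_pos _).le
                  (mul_nonneg hM4 (pow_nonneg hM0.le _))
                exact mul_le_mul_of_nonneg_right h2 (pow_nonneg hM0.le _)
            _ = ((4:ℝ)⁻¹) ^ m * (M ^ (n - m - 1) * M ^ m) * (((m:ℝ) + 2) ^ 2 * uu n) := by
                rw [hsplit]; ring
            _ ≤ ((4:ℝ)⁻¹) ^ m * M ^ n * (((m:ℝ) + 2) ^ 2 * uu n) := by
                rw [h4]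
                apply mul_le_mul_of_nonneg_right _
                  (mul_nonneg (by positivity) (uu_pos _).le)
                apply mul_le_mul_of_nonneg_left h4' (by positivity)
        -- combine
        have hsq : ((m:ℝ) + 1) ^ 2 + ((m:ℝ) + 2) ^ 2 ≤ 20 * 2 ^ m := by
          have h6 := sq_le_two_pow m
          have h7 : ((m:ℝ) + 2) ^ 2 ≤ 4 * ((m:ℝ) + 1) ^ 2 := by
            nlinarith [Nat.cast_nonneg (α := ℝ) m]
          nlinarith
        have hpow : ((4:ℝ)⁻¹) ^ m * (2:ℝ) ^ m = ((2:ℝ)⁻¹) ^ m := by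
          rw [← mul_pow]
          norm_num
        have huun : 0 ≤ uu n := (uu_pos n).le
        have hfourm : (0:ℝ) ≤ ((4:ℝ)⁻¹) ^ m := by positivity
        -- final per-term bound
        have hmain : (∑ t ∈ comps m (n - m), ∏ j, Mseq (t j)) +
            (if m + 1 ≤ n then ∑ t ∈ comps m (n - m - 1), ∏ j, Mseq (t j) else 0)
            ≤ D ^ m * M ^ (n - m) * (16 ^ m * uu (n - m)) +
              (if m + 1 ≤ n then D ^ m * M ^ (n - m - 1) * (16 ^ m * uu (n - m - 1)) else 0) := by
          apply add_le_add (hgen (n - m) (by omega))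
          split
          · next hc => exact hgen (n - m - 1) (by omega)
          · exact le_refl 0
        have hBm : (0:ℝ) ≤ B ^ m := pow_nonneg hB.le m
        calc C * B ^ m * ((∑ t ∈ comps m (n - m), ∏ j, Mseq (t j)) +
              (if m + 1 ≤ n then ∑ t ∈ comps m (n - m - 1), ∏ j, Mseq (t j) else 0))
            ≤ C * B ^ m * (D ^ m * M ^ (n - m) * (16 ^ m * uu (n - m)) +
              (if m + 1 ≤ n then D ^ m * M ^ (n - m - 1) * (16 ^ m * uu (n - m - 1)) else 0)) := by
              apply mul_le_mul_of_nonneg_left hmain (mul_nonneg hC.le hBm)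
          _ = C * (B ^ m * (D ^ m * M ^ (n - m) * (16 ^ m * uu (n - m))) +
              B ^ m * (if m + 1 ≤ n then D ^ m * M ^ (n - m - 1) * (16 ^ m * uu (n - m - 1)) else 0)) := by
              ring
          _ ≤ C * (((4:ℝ)⁻¹) ^ m * M ^ n * (((m:ℝ) + 1) ^ 2 * uu n) +
              ((4:ℝ)⁻¹) ^ m * M ^ n * (((m:ℝ) + 2) ^ 2 * uu n)) := by
              apply mul_le_mul_of_nonneg_left _ hC.le
              apply add_le_add hA
              split
              · next hc => exact hBpiece hc
              · next hc =>
                  rw [mul_zero]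
                  exact mul_nonneg (mul_nonneg hfourm hMn0)
                    (mul_nonneg (by positivity) huun)
          _ = C * (((4:ℝ)⁻¹) ^ m * M ^ n * uu n * (((m:ℝ) + 1) ^ 2 + ((m:ℝ) + 2) ^ 2)) := by
              ring
          _ ≤ C * (((4:ℝ)⁻¹) ^ m * M ^ n * uu n * (20 * 2 ^ m)) := by
              apply mul_le_mul_of_nonneg_left _ hC.le
              apply mul_le_mul_of_nonneg_left hsq
              exact mul_nonneg (mul_nonneg hfourm hMn0) huun
          _ = 20 * C * (M ^ n * uu n) * (((4:ℝ)⁻¹) ^ m * (2:ℝ) ^ m) := by ring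
          _ = 20 * C * (M ^ n * uu n) * ((2:ℝ)⁻¹) ^ m := by rw [hpow]
      calc Mseq n = _ := hrec n
        _ ≤ ∑ m ∈ Finset.range (n + 1), 20 * C * (M ^ n * uu n) * ((2:ℝ)⁻¹) ^ m :=
            Finset.sum_le_sum hterm
        _ = 20 * C * (M ^ n * uu n) * ∑ m ∈ Finset.range (n + 1), ((2:ℝ)⁻¹) ^ m := by
            rw [← Finset.mul_sum]
        _ ≤ 20 * C * (M ^ n * uu n) * 2 := by
            apply mul_le_mul_of_nonneg_left (geom_le_two _)
            exact mul_nonneg (by positivity) (mul_nonneg (pow_nonneg hM0.le n) (uu_pos n).le)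
        _ = D * M ^ n * uu n := by rw [hDeq]; ring
  refine ⟨D, hD0, M, hM0, fun n => ?_⟩
  calc Mseq n ≤ D * M ^ n * uu n := key n
    _ ≤ D * M ^ n * 1 := by
        apply mul_le_mul_of_nonneg_left (uu_le_one n)
        exact mul_nonneg hD0.le (pow_nonneg hM0.le n)
    _ = D * M ^ n := by ring
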